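/- Let ℓ ≥ 1 and let u = (u_1,…,u_ℓ) be the unique real-analytic solution of the small-cluster system on [0, t_ex) with nonnegative normalized initial data. Then u_n(t) ≥ 0 for every 1 ≤ n ≤ ℓ and every t ∈ [0, t_ex). -/

import Mathlib

open Finset Filter Topology

noncomputable section

/-- Total reaction probability mass for the small-cluster system:
`M(t) = ∑_{i=1}^{ℓ} ∑_{j=ℓ−i+1}^{ℓ} i j u_i(t) u_j(t)`. -/
def Msmall (ℓ : ℕ) (u : ℕ → ℝ → ℝ) (t : ℝ) : ℝ :=
  ∑ i ∈ Finset.Icc 1 ℓ, ∑ j ∈ Finset.Icc (ℓ - i + 1) ℓ,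
    (i : ℝ) * (j : ℝ) * u i t * u j t

/-- Right-hand side of the small-cluster equation for `u n` (`1 ≤ n ≤ ℓ`):
`(1/M) ∑_{i=n}^{ℓ} i(n+ℓ−i) u_i u_{n+ℓ−i} − (2 n u_n/M) ∑_{i=ℓ−n+1}^{ℓ} i u_i`. -/
def smallRHS (ℓ : ℕ) (u : ℕ → ℝ → ℝ) (n : ℕ) (t : ℝ) : ℝ :=
  (1 / Msmall ℓ u t) *
      (∑ i ∈ Finset.Icc n ℓ,
        (i : ℝ) * ((n + ℓ - i : ℕ) : ℝ) * u i t * u (n + ℓ - i) t)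
    - (2 * (n : ℝ) * u n t / Msmall ℓ u t) *
        ∑ i ∈ Finset.Icc (ℓ - n + 1) ℓ, (i : ℝ) * u i t


/-- let `ℓ ≥ 1` and let `u` be the unique real-analytic solution
of the small-cluster system on `[0, t_ex)` (here: on `[0,b)` with `M > 0`, which
holds exactly for `b ≤ t_ex`) with nonnegative normalized initial data.  Then
`u_n(t) ≥ 0` for every `1 ≤ n ≤ ℓ` and `t ∈ [0, t_ex)`. -/
theorem small_cluster_nonneg (ℓ : ℕ) (hℓ : 1 ≤ ℓ) (b : ℝ) (hb : 0 < b)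
    (u : ℕ → ℝ → ℝ)
    (hanalytic : ∀ n ∈ Finset.Icc 1 ℓ, AnalyticOn ℝ (u n) (Set.Ico 0 b))
    (hMpos : ∀ t ∈ Set.Ico (0 : ℝ) b, 0 < Msmall ℓ u t)
    (hode : ∀ n ∈ Finset.Icc 1 ℓ, ∀ t ∈ Set.Ico (0 : ℝ) b,
      HasDerivWithinAt (u n) (smallRHS ℓ u n t) (Set.Ico 0 b) t)
    (hinit_nonneg : ∀ n ∈ Finset.Icc 1 ℓ, 0 ≤ u n 0)
    (hinit_sum : ∑ n ∈ Finset.Icc 1 ℓ, u n 0 = 1) :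
    ∀ n ∈ Finset.Icc 1 ℓ, ∀ t ∈ Set.Ico (0 : ℝ) b, 0 ≤ u n t := by
  classical
  by_contra hcon
  push_neg at hcon
  obtain ⟨n0, hn0, t0, ht0, hneg0⟩ := hcon
  set s : Set ℝ := Set.Ico (0:ℝ) b with hs
  set A : Set ℝ := {t | t ∈ s ∧ ∃ n ∈ Finset.Icc 1 ℓ, u n t < 0} with hAdef
  have hAne : A.Nonempty := ⟨t0, ht0, n0, hn0, hneg0⟩
  have hAbdd : BddBelow A := ⟨0, fun t ht => ht.1.1⟩
  set T : ℝ := sInf A with hTdef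
  have hT0 : 0 ≤ T := le_csInf hAne (fun t ht => ht.1.1)
  have hTt0 : T ≤ t0 := csInf_le hAbdd ⟨ht0, n0, hn0, hneg0⟩
  have hTb : T < b := lt_of_le_of_lt hTt0 ht0.2
  have hTs : T ∈ s := ⟨hT0, hTb⟩
  -- nonnegativity strictly before T
  have hbelow : ∀ t, 0 ≤ t → t < T → ∀ n ∈ Finset.Icc 1 ℓ, 0 ≤ u n t := by
    intro t ht0' htT n hn
    by_contra hlt
    push_neg at hlt
    have htA : t ∈ A := ⟨⟨ht0', htT.trans hTb⟩, n, hn, hlt⟩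
    exact absurd (csInf_le hAbdd htA) (not_le.2 htT)
  have hcont : ∀ n ∈ Finset.Icc 1 ℓ, ∀ t ∈ s, ContinuousWithinAt (u n) s t :=
    fun n hn t ht => (hode n hn t ht).continuousWithinAt
  set l : Filter ℝ := 𝓝[>] T with hldef
  haveI hlne : l.NeBot := by rw [hldef]; infer_instance
  have hIoo : Set.Ioo T b ∈ l := by
    rw [hldef]; exact Ioo_mem_nhdsGT_of_mem ⟨le_refl T, hTb⟩
  have hIoosub : Set.Ioo T b ⊆ s := fun x hx => ⟨hT0.trans hx.1.le, hx.2⟩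
  have hlle : l ≤ 𝓝 T := by rw [hldef]; exact nhdsWithin_le_nhds
  -- tendsto along l
  have htd : ∀ n ∈ Finset.Icc 1 ℓ, Filter.Tendsto (u n) l (𝓝 (u n T)) := by
    intro n hn
    have h1 : ContinuousWithinAt (u n) (Set.Ioo T b) T := (hcont n hn T hTs).mono hIoosub
    rw [ContinuousWithinAt, nhdsWithin_Ioo_eq_nhdsGT hTb] at h1
    rwa [hldef]
  -- nonnegativity at T
  have hTnn : ∀ n ∈ Finset.Icc 1 ℓ, 0 ≤ u n T := by
    intro n hn
    rcases eq_or_lt_of_le hT0 with h0 | h0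
    · rw [← h0]; exact hinit_nonneg n hn
    · have h1 : ContinuousWithinAt (u n) (Set.Ioo 0 T) T :=
        (hcont n hn T hTs).mono (fun x hx => ⟨hx.1.le, hx.2.trans hTb⟩)
      rw [ContinuousWithinAt, nhdsWithin_Ioo_eq_nhdsLT h0] at h1
      refine ge_of_tendsto h1 ?_
      filter_upwards [Ioo_mem_nhdsLT_of_mem (⟨h0, le_refl T⟩ : T ∈ Set.Ioc 0 T)] with t ht
      exact hbelow t ht.1.le ht.2 n hn
  have hTA : T ∉ A := by
    rintro ⟨-, n, hn, hlt⟩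
    exact absurd (hTnn n hn) (not_le.2 hlt)
  -- frequently some coordinate is negative just after T
  have hfreq : ∃ᶠ t in l, ∃ n ∈ Finset.Icc 1 ℓ, u n t < 0 := by
    rw [hldef, Filter.frequently_iff]
    intro V hV
    rw [mem_nhdsGT_iff_exists_Ioo_subset] at hV
    obtain ⟨c, hc, hsub⟩ := hV
    obtain ⟨t, htA, htc⟩ := exists_lt_of_csInf_lt hAne (show sInf A < c from hc)
    have htT : T < t :=
      lt_of_le_of_ne (csInf_le hAbdd htA) (fun h => hTA (by rw [h]; exact htA))
    exact ⟨t, hsub ⟨htT, htc⟩, htA.2⟩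
  have hbad : ∃ n ∈ Finset.Icc 1 ℓ, ∃ᶠ t in l, u n t < 0 := by
    by_contra hbc
    push_neg at hbc
    have hev : ∀ᶠ t in l, ∀ n ∈ Finset.Icc 1 ℓ, 0 ≤ u n t := by
      rw [eventually_all_finset]
      intro n hn
      have h1 := hbc n hn
      filter_upwards [h1] with t ht using ht
    obtain ⟨t, ⟨n, hn, hlt⟩, hall⟩ := (hfreq.and_eventually hev).exists
    exact absurd (hall n hn) (not_le.2 hlt)
  -- analytic extensions at T
  have hext : ∀ n ∈ Finset.Icc 1 ℓ, ∃ w : ℝ → ℝ,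
      Set.EqOn (u n) w (insert T s) ∧ AnalyticAt ℝ w T := by
    intro n hn
    obtain ⟨w, -, hweq, hwa⟩ := (hanalytic n hn T hTs).exists_analyticAt
    exact ⟨w, hweq, hwa⟩
  choose! v hveq hva using hext
  have huv : ∀ n ∈ Finset.Icc 1 ℓ, ∀ᶠ t in l, u n t = v n t := by
    intro n hn
    filter_upwards [hIoo] with t ht
    exact hveq n hn (Set.mem_insert_of_mem _ (hIoosub ht))
  have huvT : ∀ n ∈ Finset.Icc 1 ℓ, u n T = v n T :=
    fun n hn => hveq n hn (Set.mem_insert _ _)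
  -- the set of bad indices
  set Bad : Finset ℕ := (Finset.Icc 1 ℓ).filter (fun j => ∃ᶠ t in l, u j t < 0) with hBaddef
  have hBadne : Bad.Nonempty := by
    obtain ⟨n, hn, hf⟩ := hbad
    exact ⟨n, Finset.mem_filter.2 ⟨hn, hf⟩⟩
  -- order data for bad indices
  have hdata : ∀ j ∈ Bad, ∃ (k : ℕ) (g : ℝ → ℝ), AnalyticAt ℝ g T ∧ g T ≠ 0 ∧
      ∀ᶠ z in 𝓝 T, v j z = (z - T) ^ k * g z := by
    intro j hj
    obtain ⟨hjmem, hjf⟩ := Finset.mem_filter.1 hj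
    have hnz : ¬ ∀ᶠ z in 𝓝 T, v j z = 0 := by
      intro hz
      have hz' : ∀ᶠ t in l, u j t = 0 := by
        filter_upwards [hz.filter_mono hlle, huv j hjmem] with t h1 h2
        rw [h2, h1]
      obtain ⟨t, hlt, h0⟩ := (hjf.and_eventually hz').exists
      rw [h0] at hlt; exact lt_irrefl 0 hlt
    obtain ⟨k, g, hg, hgne, hgeq⟩ :=
      (hva j hjmem).exists_eventuallyEq_pow_smul_nonzero_iff.mpr hnz
    exact ⟨k, g, hg, hgne, by simpa [smul_eq_mul] using hgeq⟩
  choose! kn gn hgA hgne hgeq using hdata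
  -- bad index of minimal vanishing order
  obtain ⟨m, hmB, hmin⟩ := Bad.exists_min_image kn hBadne
  have hmmem : m ∈ Finset.Icc 1 ℓ := (Finset.mem_filter.1 hmB).1
  have hmfreq : ∃ᶠ t in l, u m t < 0 := (Finset.mem_filter.1 hmB).2
  have humT : u m T = 0 := by
    refine le_antisymm ?_ (hTnn m hmmem)
    have h1 : u m T ∈ closure (Set.Iic (0:ℝ)) :=
      mem_closure_of_frequently_of_tendsto
        (hmfreq.mono fun t ht => Set.mem_Iic.2 (le_of_lt ht)) (htd m hmmem)
    rwa [closure_Iic] at h1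
  have hk1 : 1 ≤ kn m := by
    rcases Nat.eq_zero_or_pos (kn m) with h0 | h
    · exfalso
      have h1 := (hgeq m hmB).self_of_nhds
      rw [h0, pow_zero, one_mul] at h1
      apply hgne m hmB
      rw [← h1, ← huvT m hmmem, humT]
    · exact h
  have hgTneg : gn m T < 0 := by
    rcases lt_or_gt_of_ne (hgne m hmB) with h | h
    · exact h
    · exfalso
      have hpos : ∀ᶠ z in 𝓝 T, 0 < gn m z :=
        (hgA m hmB).continuousAt.eventually (lt_mem_nhds h)
      have hev : ∀ᶠ t in l, 0 ≤ u m t := by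
        filter_upwards [hpos.filter_mono hlle, (hgeq m hmB).filter_mono hlle,
          huv m hmmem, hIoo] with t h1 h2 h3 h4
        rw [h3, h2]
        exact mul_nonneg (pow_nonneg (by linarith [h4.1]) _) h1.le
      obtain ⟨t, hlt, hge⟩ := (hmfreq.and_eventually hev).exists
      linarith
  set k : ℕ := kn m with hkdef
  -- basic limits
  have htsub : Filter.Tendsto (fun t => t - T) l (𝓝 0) := by
    have h1 : Filter.Tendsto (fun t : ℝ => t - T) (𝓝 T) (𝓝 (T - T)) :=
      (continuous_id.sub continuous_const).tendsto T
    rw [sub_self] at h1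
    exact h1.mono_left hlle
  -- ratio limits for bad indices
  have hratio : ∀ j ∈ Bad, Filter.Tendsto (fun t => u j t / (t - T) ^ (k - 1)) l (𝓝 0) := by
    intro j hj
    have hjmem : j ∈ Finset.Icc 1 ℓ := (Finset.mem_filter.1 hj).1
    have hkj : k ≤ kn j := hmin j hj
    have heq' : (fun t => u j t / (t - T) ^ (k - 1))
        =ᶠ[l] (fun t => (t - T) ^ (kn j - (k - 1)) * gn j t) := by
      filter_upwards [(hgeq j hj).filter_mono hlle, huv j hjmem, hIoo] with t h1 h2 h3
      have hne : t - T ≠ 0 := sub_ne_zero.2 (ne_of_gt h3.1)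
      rw [h2, h1, show kn j = (k - 1) + (kn j - (k - 1)) by omega, pow_add]
      field_simp
      ring
      simp only [Nat.add_sub_cancel]
    have h2 : Filter.Tendsto (fun t => (t - T) ^ (kn j - (k - 1)) * gn j t) l
        (𝓝 ((0 : ℝ) ^ (kn j - (k - 1)) * gn j T)) :=
      (htsub.pow _).mul ((hgA j hj).continuousAt.tendsto.mono_left hlle)
    rw [zero_pow (by omega : kn j - (k - 1) ≠ 0), zero_mul] at h2
    exact h2.congr' heq'.symm
  -- the derivative of gn m is continuous at T
  have hdga : AnalyticAt ℝ (deriv (gn m)) T := by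
    have h1 : AnalyticOnNhd ℝ (gn m) {x | AnalyticAt ℝ (gn m) x} := fun x hx => hx
    exact h1.deriv T (hgA m hmB)
  have hdgt : Filter.Tendsto (deriv (gn m)) l (𝓝 (deriv (gn m) T)) :=
    hdga.continuousAt.tendsto.mono_left hlle
  -- eventual formula for the derivative of u m
  obtain ⟨r, hr, hball⟩ : ∃ r > 0, ∀ z ∈ Metric.ball T r, v m z = (z - T) ^ k * gn m z :=
    Metric.eventually_nhds_iff_ball.1 (hgeq m hmB)
  have hEvAn : ∀ᶠ t in l, AnalyticAt ℝ (gn m) t :=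
    ((hgA m hmB).eventually_analyticAt).filter_mono hlle
  have hballl : ∀ᶠ t in l, t ∈ Metric.ball T r :=
    hlle (Metric.ball_mem_nhds T hr)
  have hform : ∀ᶠ t in l, smallRHS ℓ u m t
      = (k : ℝ) * (t - T) ^ (k - 1) * gn m t + (t - T) ^ k * deriv (gn m) t := by
    filter_upwards [hIoo, hballl, hEvAn] with t ht1 ht2 ht3
    have hsnh : s ∈ 𝓝 t := mem_nhds_iff.2 ⟨Set.Ioo T b, hIoosub, isOpen_Ioo, ht1⟩
    have hD1 : HasDerivAt (u m) (smallRHS ℓ u m t) t :=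
      (hode m hmmem t (hIoosub ht1)).hasDerivAt hsnh
    have hz : HasDerivAt (fun z : ℝ => z - T) 1 t := (hasDerivAt_id t).sub_const T
    have hpow : HasDerivAt (fun z : ℝ => (z - T) ^ k) ((k : ℝ) * (t - T) ^ (k - 1) * 1) t :=
      hz.pow k
    have hgd : HasDerivAt (gn m) (deriv (gn m) t) t := ht3.differentiableAt.hasDerivAt
    have hDF : HasDerivAt (fun z => (z - T) ^ k * gn m z)
        ((k : ℝ) * (t - T) ^ (k - 1) * 1 * gn m t + (t - T) ^ k * deriv (gn m) t) t :=
      hpow.mul hgd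
    have heqt : u m =ᶠ[𝓝 t] (fun z => (z - T) ^ k * gn m z) := by
      have hmem : Set.Ioo T b ∩ Metric.ball T r ∈ 𝓝 t :=
        Filter.inter_mem (isOpen_Ioo.mem_nhds ht1) (Metric.isOpen_ball.mem_nhds ht2)
      filter_upwards [hmem] with z hz'
      rw [hveq m hmmem (Set.mem_insert_of_mem _ (hIoosub hz'.1)), hball z hz'.2]
    have hD2 : HasDerivAt (u m)
        ((k : ℝ) * (t - T) ^ (k - 1) * 1 * gn m t + (t - T) ^ k * deriv (gn m) t) t :=
      hDF.congr_of_eventuallyEq heqt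
    have := hD1.unique hD2
    rw [this]; ring
  -- limit of smallRHS / (t-T)^(k-1)
  have hE : Filter.Tendsto (fun t => smallRHS ℓ u m t / (t - T) ^ (k - 1)) l
      (𝓝 ((k : ℝ) * gn m T)) := by
    have heq2 : (fun t => smallRHS ℓ u m t / (t - T) ^ (k - 1))
        =ᶠ[l] (fun t => (k : ℝ) * gn m t + (t - T) * deriv (gn m) t) := by
      filter_upwards [hform, hIoo] with t h1 h2
      have hne : (t - T) ≠ 0 := sub_ne_zero.2 (ne_of_gt h2.1)
      have hpk : (t - T) ^ k = (t - T) ^ (k - 1) * (t - T) := by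
        rw [← pow_succ]; congr 1; omega
      rw [h1, hpk]
      field_simp
    have h3 : Filter.Tendsto (fun t => (k : ℝ) * gn m t + (t - T) * deriv (gn m) t) l
        (𝓝 ((k : ℝ) * gn m T + 0 * deriv (gn m) T)) :=
      (tendsto_const_nhds.mul ((hgA m hmB).continuousAt.tendsto.mono_left hlle)).add
        (htsub.mul hdgt)
    rw [zero_mul, add_zero] at h3
    exact h3.congr' heq2.symm
  -- limit of Msmall
  have hMT : Filter.Tendsto (fun t => Msmall ℓ u t) l (𝓝 (Msmall ℓ u T)) := by
    unfold Msmall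
    apply tendsto_finset_sum
    intro i hi
    apply tendsto_finset_sum
    intro j hj
    have hj' : j ∈ Finset.Icc 1 ℓ := by
      simp only [Finset.mem_Icc] at hi hj ⊢; omega
    exact (tendsto_const_nhds.mul (htd i hi)).mul (htd j hj')
  have hMTpos : 0 < Msmall ℓ u T := hMpos T hTs
  -- limit of S2
  have hS2 : Filter.Tendsto (fun t => ∑ i ∈ Finset.Icc (ℓ - m + 1) ℓ, (i : ℝ) * u i t) l
      (𝓝 (∑ i ∈ Finset.Icc (ℓ - m + 1) ℓ, (i : ℝ) * u i T)) := by
    apply tendsto_finset_sum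
    intro i hi
    have hi' : i ∈ Finset.Icc 1 ℓ := by
      simp only [Finset.mem_Icc] at hi ⊢; omega
    exact tendsto_const_nhds.mul (htd i hi')
  -- split the quadratic sum into good and bad parts
  set p : ℕ → Prop := fun i => i ∉ Bad ∧ (m + ℓ - i) ∉ Bad with hpdef
  have hPQ : ∀ t, (∑ i ∈ (Finset.Icc m ℓ).filter p,
        (i : ℝ) * ((m + ℓ - i : ℕ) : ℝ) * u i t * u (m + ℓ - i) t)
      + (∑ i ∈ (Finset.Icc m ℓ).filter (fun i => ¬ p i),
        (i : ℝ) * ((m + ℓ - i : ℕ) : ℝ) * u i t * u (m + ℓ - i) t)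
      = ∑ i ∈ Finset.Icc m ℓ,
        (i : ℝ) * ((m + ℓ - i : ℕ) : ℝ) * u i t * u (m + ℓ - i) t := by
    intro t
    exact Finset.sum_filter_add_sum_filter_not _ _ _
  have hmm : 1 ≤ m ∧ m ≤ ℓ := Finset.mem_Icc.1 hmmem
  -- Q/(t-T)^(k-1) → 0
  have hQ : Filter.Tendsto (fun t => (∑ i ∈ (Finset.Icc m ℓ).filter (fun i => ¬ p i),
      (i : ℝ) * ((m + ℓ - i : ℕ) : ℝ) * u i t * u (m + ℓ - i) t) / (t - T) ^ (k - 1)) l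
      (𝓝 0) := by
    have h0 : (0:ℝ) = ∑ i ∈ (Finset.Icc m ℓ).filter (fun i => ¬ p i), (0:ℝ) := by simp
    rw [h0]
    have hsd : ∀ t : ℝ, (∑ i ∈ (Finset.Icc m ℓ).filter (fun i => ¬ p i),
        (i : ℝ) * ((m + ℓ - i : ℕ) : ℝ) * u i t * u (m + ℓ - i) t) / (t - T) ^ (k - 1)
        = ∑ i ∈ (Finset.Icc m ℓ).filter (fun i => ¬ p i),
          ((i : ℝ) * ((m + ℓ - i : ℕ) : ℝ) * u i t * u (m + ℓ - i) t) / (t - T) ^ (k - 1) :=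
      fun t => Finset.sum_div _ _ _
    refine Filter.Tendsto.congr (fun t => (hsd t).symm) ?_
    apply tendsto_finset_sum
    intro i hi
    obtain ⟨hi1, hi2⟩ := Finset.mem_filter.1 hi
    have hiIcc := Finset.mem_Icc.1 hi1
    have himem : i ∈ Finset.Icc 1 ℓ := Finset.mem_Icc.2 ⟨by omega, hiIcc.2⟩
    have hjmem : (m + ℓ - i) ∈ Finset.Icc 1 ℓ := Finset.mem_Icc.2 ⟨by omega, by omega⟩
    simp only [hpdef, not_and, not_not] at hi2
    by_cases hiB : i ∈ Bad
    · have h1 : Filter.Tendsto (fun t =>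
          ((i : ℝ) * ((m + ℓ - i : ℕ) : ℝ)) * (u i t / (t - T) ^ (k - 1)) * u (m + ℓ - i) t) l
          (𝓝 (((i : ℝ) * ((m + ℓ - i : ℕ) : ℝ)) * 0 * u (m + ℓ - i) T)) :=
        (tendsto_const_nhds.mul (hratio i hiB)).mul (htd _ hjmem)
      rw [mul_zero, zero_mul] at h1
      refine h1.congr (fun t => ?_)
      rw [div_eq_mul_inv, div_eq_mul_inv]; ring
    · have hjB : (m + ℓ - i) ∈ Bad := hi2 hiB
      have h1 : Filter.Tendsto (fun t =>
          ((i : ℝ) * ((m + ℓ - i : ℕ) : ℝ) * u i t) * (u (m + ℓ - i) t / (t - T) ^ (k - 1))) l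
          (𝓝 (((i : ℝ) * ((m + ℓ - i : ℕ) : ℝ) * u i T) * 0)) :=
        ((tendsto_const_nhds.mul (htd i himem)).mul (hratio _ hjB))
      rw [mul_zero] at h1
      refine h1.congr (fun t => ?_)
      rw [div_eq_mul_inv, div_eq_mul_inv]; ring
  -- the good part has the negative limit
  have hfinal : Filter.Tendsto (fun t => (1 / Msmall ℓ u t) *
      ((∑ i ∈ (Finset.Icc m ℓ).filter p,
        (i : ℝ) * ((m + ℓ - i : ℕ) : ℝ) * u i t * u (m + ℓ - i) t) / (t - T) ^ (k - 1))) l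
      (𝓝 ((k : ℝ) * gn m T)) := by
    have heqf : (fun t => (1 / Msmall ℓ u t) *
        ((∑ i ∈ (Finset.Icc m ℓ).filter p,
          (i : ℝ) * ((m + ℓ - i : ℕ) : ℝ) * u i t * u (m + ℓ - i) t) / (t - T) ^ (k - 1)))
        =ᶠ[l] (fun t => smallRHS ℓ u m t / (t - T) ^ (k - 1)
          - (1 / Msmall ℓ u t) * ((∑ i ∈ (Finset.Icc m ℓ).filter (fun i => ¬ p i),
              (i : ℝ) * ((m + ℓ - i : ℕ) : ℝ) * u i t * u (m + ℓ - i) t) / (t - T) ^ (k - 1))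
          + (2 * (m : ℝ) * (u m t / (t - T) ^ (k - 1)) / Msmall ℓ u t) *
              ∑ i ∈ Finset.Icc (ℓ - m + 1) ℓ, (i : ℝ) * u i t) := by
      filter_upwards [hIoo] with t ht
      have hMne : Msmall ℓ u t ≠ 0 := ne_of_gt (hMpos t (hIoosub ht))
      have hne : t - T ≠ 0 := sub_ne_zero.2 (ne_of_gt ht.1)
      have hpne : (t - T) ^ (k - 1) ≠ 0 := pow_ne_zero _ hne
      have hS1 := hPQ t
      unfold smallRHS
      rw [← hS1]
      field_simp
      ring
    have hcomb : Filter.Tendsto (fun t => smallRHS ℓ u m t / (t - T) ^ (k - 1)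
        - (1 / Msmall ℓ u t) * ((∑ i ∈ (Finset.Icc m ℓ).filter (fun i => ¬ p i),
            (i : ℝ) * ((m + ℓ - i : ℕ) : ℝ) * u i t * u (m + ℓ - i) t) / (t - T) ^ (k - 1))
        + (2 * (m : ℝ) * (u m t / (t - T) ^ (k - 1)) / Msmall ℓ u t) *
            ∑ i ∈ Finset.Icc (ℓ - m + 1) ℓ, (i : ℝ) * u i t) l
        (𝓝 ((k : ℝ) * gn m T - (1 / Msmall ℓ u T) * 0
          + (2 * (m : ℝ) * 0 / Msmall ℓ u T) *
            ∑ i ∈ Finset.Icc (ℓ - m + 1) ℓ, (i : ℝ) * u i T)) := by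
      refine Filter.Tendsto.add (Filter.Tendsto.sub hE ?_) ?_
      · exact (tendsto_const_nhds.div hMT (ne_of_gt hMTpos)).mul hQ
      · exact ((tendsto_const_nhds.mul (hratio m hmB)).div hMT (ne_of_gt hMTpos)).mul hS2
    have hval : (k : ℝ) * gn m T - (1 / Msmall ℓ u T) * 0
        + (2 * (m : ℝ) * 0 / Msmall ℓ u T) *
          ∑ i ∈ Finset.Icc (ℓ - m + 1) ℓ, (i : ℝ) * u i T = (k : ℝ) * gn m T := by
      ring
    rw [hval] at hcomb
    exact hcomb.congr' heqf.symm
  -- eventual negativity of the good part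
  have hlim_neg : (k : ℝ) * gn m T < 0 :=
    mul_neg_of_pos_of_neg (by exact_mod_cast hk1 : (0:ℝ) < (k:ℝ)) hgTneg
  have hneg_ev : ∀ᶠ t in l, (1 / Msmall ℓ u t) *
      ((∑ i ∈ (Finset.Icc m ℓ).filter p,
        (i : ℝ) * ((m + ℓ - i : ℕ) : ℝ) * u i t * u (m + ℓ - i) t) / (t - T) ^ (k - 1)) < 0 :=
    hfinal.eventually (gt_mem_nhds hlim_neg)
  -- but the good part is eventually nonnegative
  have hGood : ∀ᶠ t in l, ∀ j ∈ Finset.Icc 1 ℓ, j ∉ Bad → 0 ≤ u j t := by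
    rw [eventually_all_finset]
    intro j hj
    by_cases hjB : j ∈ Bad
    · exact Filter.Eventually.of_forall (fun t h => absurd hjB h)
    · have hnf : ¬ ∃ᶠ t in l, u j t < 0 := fun hf => hjB (Finset.mem_filter.2 ⟨hj, hf⟩)
      rw [Filter.not_frequently] at hnf
      filter_upwards [hnf] with t ht _ using not_lt.1 ht
  have hnonneg_ev : ∀ᶠ t in l, 0 ≤ (1 / Msmall ℓ u t) *
      ((∑ i ∈ (Finset.Icc m ℓ).filter p,
        (i : ℝ) * ((m + ℓ - i : ℕ) : ℝ) * u i t * u (m + ℓ - i) t) / (t - T) ^ (k - 1)) := by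
    filter_upwards [hGood, hIoo] with t hg ht
    have hM := hMpos t (hIoosub ht)
    have hφ : 0 < (t - T) ^ (k - 1) := pow_pos (sub_pos.2 ht.1) _
    have hP0 : 0 ≤ ∑ i ∈ (Finset.Icc m ℓ).filter p,
        (i : ℝ) * ((m + ℓ - i : ℕ) : ℝ) * u i t * u (m + ℓ - i) t := by
      apply Finset.sum_nonneg
      intro i hi
      obtain ⟨hi1, hi2⟩ := Finset.mem_filter.1 hi
      have hiIcc := Finset.mem_Icc.1 hi1
      have himem : i ∈ Finset.Icc 1 ℓ := Finset.mem_Icc.2 ⟨by omega, hiIcc.2⟩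
      have hjmem : (m + ℓ - i) ∈ Finset.Icc 1 ℓ := Finset.mem_Icc.2 ⟨by omega, by omega⟩
      simp only [hpdef] at hi2
      have h1 := hg i himem hi2.1
      have h2 := hg _ hjmem hi2.2
      have hc : (0:ℝ) ≤ (i : ℝ) * ((m + ℓ - i : ℕ) : ℝ) := by positivity
      exact mul_nonneg (mul_nonneg hc h1) h2
    exact mul_nonneg (le_of_lt (by positivity)) (div_nonneg hP0 hφ.le)
  obtain ⟨t, h1, h2⟩ := (hneg_ev.and hnonneg_ev).exists
  linarith

end
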